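/- Let p ≥ 1 and n = 2p+2. Then the geometric realization of the total 2-cut complex Δᵗ₂(C_n^p) of the p-th power of the cycle graph C_n is homotopy equivalent to the sphere S^{(n−4)/2} = S^{p−1}. -/

import Mathlib

/-- The total 2-cut complex of a finite simple graph `G`: the faces are the subsets
`σ` of the vertex set whose complement `σᶜ` contains a "disconnected 2-set", i.e.
two distinct nonadjacent vertices. -/
def totalCut2 {V : Type*} [Fintype V] [DecidableEq V] (G : SimpleGraph V) :
    Set (Finset V) :=
  {σ | ∃ u v : V, u ∉ σ ∧ v ∉ σ ∧ u ≠ v ∧ ¬ G.Adj u v}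

/-- The `p`-th power `C_n^p` of the cycle graph `C_n`, on vertex set `Fin n`:
distinct `u, v` are adjacent iff `v ≡ u ± t (mod n)` for some `1 ≤ t ≤ p`. -/
def cyclePower (n p : ℕ) : SimpleGraph (Fin n) where
  Adj u v := u ≠ v ∧ ∃ t, 1 ≤ t ∧ t ≤ p ∧
      ((u.val + t) % n = v.val ∨ (v.val + t) % n = u.val)
  symm := by
    constructor
    rintro u v ⟨h, t, h1, h2, h3⟩
    exact ⟨h.symm, t, h1, h2, h3.symm⟩
  loopless := by constructor; rintro u ⟨h, -⟩; exact h rfl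

/-- The geometric realization of a simplicial complex `Δ` on a finite vertex set `V`,
as the subspace of `V → ℝ` consisting of convex combinations of vertices
supported on a face of `Δ`. -/
abbrev geomRealization {V : Type*} [Fintype V] (Δ : Set (Finset V)) : Type _ :=
  {f : V → ℝ // (∀ v, 0 ≤ f v) ∧ (∑ v, f v) = 1 ∧ ∃ s ∈ Δ, Function.support f = ↑s}

namespace CutProof
open unitInterval


variable (p : ℕ)

def V1 (i : Fin (p+1)) : Fin (2*p+2) := ⟨i.val, by omega⟩
def V2 (i : Fin (p+1)) : Fin (2*p+2) := ⟨i.val + p + 1, by omega⟩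

lemma nat_key (a b : ℕ) (ha : a < 2*p+2) (hb : b < 2*p+2) (hab : a < b)
    (h : ∀ t, 1 ≤ t → t ≤ p →
      ¬((a + t) % (2*p+2) = b ∨ (b + t) % (2*p+2) = a)) :
    b = a + p + 1 := by
  by_contra hne
  rcases lt_or_ge (b - a) (p+1) with hd | hd
  · exact h (b - a) (by omega) (by omega) (Or.inl (by rw [Nat.mod_eq_of_lt (by omega)]; omega))
  · have hd2 : b - a ≥ p + 2 := by omega
    refine h (2*p+2 - (b - a)) (by omega) (by omega) (Or.inr ?_)
    have : b + (2*p+2 - (b-a)) = a + (2*p+2) := by omega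
    rw [this, Nat.add_mod_right, Nat.mod_eq_of_lt ha]

lemma pair_of_nonadj (u v : Fin (2*p+2)) (hne : u ≠ v)
    (h : ¬ (cyclePower (2*p+2) p).Adj u v) :
    ∃ i : Fin (p+1), (u = V1 p i ∧ v = V2 p i) ∨ (u = V2 p i ∧ v = V1 p i) := by
  simp only [cyclePower] at h
  push_neg at h
  have h' := h hne
  have hvne : u.val ≠ v.val := fun hv => hne (Fin.ext hv)
  rcases lt_or_gt_of_ne hvne with hlt | hgt
  · have hb := nat_key p u.val v.val u.isLt v.isLt hlt
      (fun t h1 h2 => by have := h' t h1 h2; tauto)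
    have hu : u.val < p + 1 := by omega
    exact ⟨⟨u.val, hu⟩, Or.inl ⟨Fin.ext rfl, Fin.ext (by simp [V2]; omega)⟩⟩
  · have hb := nat_key p v.val u.val v.isLt u.isLt hgt
      (fun t h1 h2 => by have := h' t h1 h2; tauto)
    have hv : v.val < p + 1 := by omega
    exact ⟨⟨v.val, hv⟩, Or.inr ⟨Fin.ext (by simp [V2]; omega), Fin.ext rfl⟩⟩

lemma V1_ne_V2 (i : Fin (p+1)) : V1 p i ≠ V2 p i := by
  simp [V1, V2, Fin.ext_iff]; omega

lemma nonadj (i : Fin (p+1)) : ¬ (cyclePower (2*p+2) p).Adj (V1 p i) (V2 p i) := by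
  rintro ⟨-, t, h1, h2, h3 | h3⟩
  · rw [V1, V2] at h3
    simp only at h3
    rw [Nat.mod_eq_of_lt (by omega)] at h3
    omega
  · rw [V1, V2] at h3
    simp only at h3
    rcases lt_or_ge (i.val + p + 1 + t) (2*p+2) with hc | hc
    · rw [Nat.mod_eq_of_lt hc] at h3; omega
    · rw [Nat.mod_eq_sub_mod hc, Nat.mod_eq_of_lt (by omega)] at h3; omega

lemma mem_iff (f : Fin (2*p+2) → ℝ) :
    (∃ s ∈ totalCut2 (cyclePower (2*p+2) p), Function.support f = ↑s)
    ↔ ∃ i : Fin (p+1), f (V1 p i) = 0 ∧ f (V2 p i) = 0 := by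
  classical
  constructor
  · rintro ⟨s, ⟨u, v, hu, hv, hne, hnadj⟩, hsupp⟩
    have hfu : f u = 0 := by
      by_contra hf
      exact hu (by rw [← Finset.mem_coe, ← hsupp]; exact hf)
    have hfv : f v = 0 := by
      by_contra hf
      exact hv (by rw [← Finset.mem_coe, ← hsupp]; exact hf)
    obtain ⟨i, hi | hi⟩ := pair_of_nonadj p u v hne hnadj
    · exact ⟨i, hi.1 ▸ hfu, hi.2 ▸ hfv⟩
    · exact ⟨i, hi.2 ▸ hfv, hi.1 ▸ hfu⟩
  · rintro ⟨i, h1, h2⟩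
    refine ⟨Finset.univ.filter (fun u => f u ≠ 0), ⟨V1 p i, V2 p i, ?_, ?_, V1_ne_V2 p i, nonadj p i⟩, ?_⟩
    · simp [h1]
    · simp [h2]
    · ext u; simp [Function.mem_support]


lemma sum_split (f : Fin (2*p+2) → ℝ) :
    ∑ u, f u = ∑ i : Fin (p+1), (f (V1 p i) + f (V2 p i)) := by
  let e : Fin (p+1) ⊕ Fin (p+1) ≃ Fin (2*p+2) :=
    finSumFinEquiv.trans (finCongr (by omega))
  calc ∑ u, f u = ∑ x : Fin (p+1) ⊕ Fin (p+1), f (e x) := (Equiv.sum_comp e f).symm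
    _ = ∑ i : Fin (p+1), f (e (.inl i)) + ∑ i : Fin (p+1), f (e (.inr i)) :=
        Fintype.sum_sum_type _
    _ = ∑ i : Fin (p+1), (f (V1 p i) + f (V2 p i)) := by
        rw [← Finset.sum_add_distrib]
        refine Finset.sum_congr rfl fun i _ => ?_
        congr 2 <;> simp [e, V1, V2, Fin.ext_iff] <;> omega

abbrev Xsp := geomRealization (totalCut2 (cyclePower (2*p+2) p))

abbrev Ysp := {g : Fin (p+1) → ℝ // (∀ i, 0 ≤ g i) ∧ ∑ i, g i = 1 ∧ ∃ i, g i = 0}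

def PmapF (f : Fin (2*p+2) → ℝ) : Fin (p+1) → ℝ := fun i => f (V1 p i) + f (V2 p i)

def Pmap (f : Xsp p) : Ysp p := by
  refine ⟨PmapF p f.1, fun i => add_nonneg (f.2.1 _) (f.2.1 _), ?_, ?_⟩
  · rw [show (∑ i, PmapF p f.1 i) = ∑ i, (f.1 (V1 p i) + f.1 (V2 p i)) from rfl, ← sum_split p f.1]; exact f.2.2.1
  · obtain ⟨i, h1, h2⟩ := (mem_iff p f.1).mp f.2.2.2
    exact ⟨i, by simp [PmapF, h1, h2]⟩

def SmapF (g : Fin (p+1) → ℝ) : Fin (2*p+2) → ℝ :=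
  fun u => if h : u.val < p+1 then g ⟨u.val, h⟩ else 0

lemma SmapF_V1 (g : Fin (p+1) → ℝ) (i : Fin (p+1)) : SmapF p g (V1 p i) = g i := by
  simp only [SmapF, V1]
  simp
  exact dif_pos i.isLt

lemma SmapF_V2 (g : Fin (p+1) → ℝ) (i : Fin (p+1)) : SmapF p g (V2 p i) = 0 := by
  simp only [SmapF, V2]
  simp

lemma SmapF_nonneg (g : Fin (p+1) → ℝ) (hg : ∀ i, 0 ≤ g i) (u : Fin (2*p+2)) :
    0 ≤ SmapF p g u := by
  simp only [SmapF]; split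
  · exact hg _
  · exact le_refl 0

lemma SmapF_sum (g : Fin (p+1) → ℝ) : ∑ u, SmapF p g u = ∑ i, g i := by
  rw [sum_split p (SmapF p g)]
  simp [SmapF_V1, SmapF_V2]

def Smap (g : Ysp p) : Xsp p := by
  refine ⟨SmapF p g.1, SmapF_nonneg p g.1 g.2.1, by rw [SmapF_sum]; exact g.2.2.1, ?_⟩
  rw [mem_iff]
  obtain ⟨i, hi⟩ := g.2.2.2
  exact ⟨i, by rw [SmapF_V1, hi], SmapF_V2 p _ i⟩

lemma Pmap_Smap (g : Ysp p) : Pmap p (Smap p g) = g := by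
  refine Subtype.ext (funext fun i => ?_)
  show SmapF p g.1 (V1 p i) + SmapF p g.1 (V2 p i) = g.1 i
  rw [SmapF_V1, SmapF_V2, add_zero]

lemma continuous_Pmap : Continuous (Pmap p) := by
  refine Continuous.subtype_mk (continuous_pi fun i => ?_) _
  exact ((continuous_apply _).comp continuous_subtype_val).add
    ((continuous_apply _).comp continuous_subtype_val)

lemma continuous_Smap : Continuous (Smap p) := by
  refine Continuous.subtype_mk (continuous_pi fun u => ?_) _
  simp only [SmapF]
  split
  · exact (continuous_apply _).comp continuous_subtype_val
  · exact continuous_const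

def retrF (q : I × Xsp p) : Fin (2*p+2) → ℝ :=
  fun u => (1 - (q.1 : ℝ)) * SmapF p (PmapF p q.2.1) u + (q.1 : ℝ) * q.2.1 u

lemma retrF_mem (q : I × Xsp p) :
    (∀ u, 0 ≤ retrF p q u) ∧ (∑ u, retrF p q u) = 1 ∧
    ∃ s ∈ totalCut2 (cyclePower (2*p+2) p), Function.support (retrF p q) = ↑s := by
  obtain ⟨t, f⟩ := q
  refine ⟨fun u => add_nonneg (mul_nonneg (unitInterval.one_minus_nonneg t)
      (SmapF_nonneg p _ (fun i => add_nonneg (f.2.1 _) (f.2.1 _)) u))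
      (mul_nonneg t.2.1 (f.2.1 u)), ?_, ?_⟩
  · simp only [retrF]
    rw [Finset.sum_add_distrib, ← Finset.mul_sum, ← Finset.mul_sum, SmapF_sum]
    have h1 : ∑ i, PmapF p f.1 i = 1 := by
      rw [show (∑ i, PmapF p f.1 i) = ∑ i, (f.1 (V1 p i) + f.1 (V2 p i)) from rfl,
        ← sum_split p f.1]; exact f.2.2.1
    rw [h1, f.2.2.1]; ring
  · rw [mem_iff]
    obtain ⟨i, h1, h2⟩ := (mem_iff p f.1).mp f.2.2.2
    refine ⟨i, ?_, ?_⟩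
    · simp only [retrF]
      rw [SmapF_V1]
      simp only [PmapF]
      rw [h1, h2]; ring
    · simp only [retrF]
      rw [SmapF_V2, h2]; ring

def retr (q : I × Xsp p) : Xsp p := ⟨retrF p q, retrF_mem p q⟩

lemma continuous_retr : Continuous (retr p) := by
  refine Continuous.subtype_mk (continuous_pi fun u => ?_) _
  have ht : Continuous (fun q : I × Xsp p => (q.1 : ℝ)) :=
    continuous_subtype_val.comp continuous_fst
  have hf : ∀ w : Fin (2*p+2), Continuous (fun q : I × Xsp p => q.2.1 w) :=
    fun w => (continuous_apply w).comp (continuous_subtype_val.comp continuous_snd)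
  refine ((continuous_const.sub ht).mul ?_).add (ht.mul (hf u))
  simp only [SmapF]
  split
  · simp only [PmapF]; exact (hf _).add (hf _)
  · exact continuous_const

def equiv1 : ContinuousMap.HomotopyEquiv (Xsp p) (Ysp p) where
  toFun := ⟨Pmap p, continuous_Pmap p⟩
  invFun := ⟨Smap p, continuous_Smap p⟩
  left_inv := by
    refine ⟨⟨⟨retr p, continuous_retr p⟩, ?_, ?_⟩⟩
    · intro f
      refine Subtype.ext (funext fun u => ?_)
      show retrF p (0, f) u = SmapF p (PmapF p f.1) u
      simp only [retrF]; push_cast; ring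
    · intro f
      refine Subtype.ext (funext fun u => ?_)
      show retrF p (1, f) u = f.1 u
      simp only [retrF]; push_cast; ring
  right_inv := by
    have : (⟨Pmap p, continuous_Pmap p⟩ : C(Xsp p, Ysp p)).comp ⟨Smap p, continuous_Smap p⟩
        = ContinuousMap.id (Ysp p) := ContinuousMap.ext fun g => Pmap_Smap p g
    rw [this]


abbrev Esp := EuclideanSpace ℝ (Fin p)
abbrev Zsp := {x : Esp p // x ≠ 0}

noncomputable def cc : ℝ := ((p:ℝ)+1)⁻¹

lemma cc_pos : 0 < cc p := by
  rw [cc]; positivity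

lemma cc_sum : ((p:ℝ)+1) * cc p = 1 := by
  rw [cc]; field_simp

noncomputable def qf (x : Esp p) : Fin (p+1) → ℝ :=
  fun i => if h : i.val < p then x ⟨i.val, h⟩ + cc p else cc p - ∑ j, x j

lemma qf_castSucc (x : Esp p) (j : Fin p) : qf p x j.castSucc = x j + cc p := by
  simp only [qf, Fin.coe_castSucc, j.isLt, dif_pos]

lemma qf_last (x : Esp p) : qf p x (Fin.last p) = cc p - ∑ j, x j := by
  simp only [qf, Fin.val_last, lt_irrefl, dif_neg, not_false_iff]

lemma qf_sum (x : Esp p) : ∑ i, qf p x i = 1 := by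
  rw [Fin.sum_univ_castSucc]
  simp only [qf_castSucc, qf_last, Finset.sum_add_distrib, Finset.sum_const,
    Finset.card_univ, Fintype.card_fin, nsmul_eq_mul]
  have := cc_sum p
  ring_nf
  ring_nf at this
  linarith

noncomputable def mf (x : Esp p) : ℝ :=
  Finset.univ.inf' Finset.univ_nonempty (qf p x)

lemma mf_le (x : Esp p) (i : Fin (p+1)) : mf p x ≤ qf p x i :=
  Finset.inf'_le _ (Finset.mem_univ i)

lemma exists_eq_mf (x : Esp p) : ∃ i, qf p x i = mf p x := by
  obtain ⟨i, -, hi⟩ := Finset.exists_mem_eq_inf' (Finset.univ_nonempty) (qf p x)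
  exact ⟨i, hi.symm⟩

lemma mf_lt (x : Esp p) (hx : x ≠ 0) : mf p x < cc p := by
  by_contra hle
  push_neg at hle
  have hall : ∀ i, cc p ≤ qf p x i := fun i => le_trans hle (mf_le p x i)
  have hsum : ∑ i : Fin (p+1), cc p = ∑ i, qf p x i := by
    rw [qf_sum, Finset.sum_const, Finset.card_univ, Fintype.card_fin, nsmul_eq_mul]
    push_cast
    rw [cc_sum]
  have heq : ∀ i ∈ Finset.univ, cc p = qf p x i :=
    (Finset.sum_eq_sum_iff_of_le (fun i _ => hall i)).mp hsum
  apply hx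
  ext j
  have := heq j.castSucc (Finset.mem_univ _)
  rw [qf_castSucc] at this
  have : x j = 0 := by linarith
  exact this

lemma mf_nonneg_zero (g : Fin (p+1) → ℝ) (hg : ∀ i, 0 ≤ g i) (i0 : Fin (p+1)) (h0 : g i0 = 0) :
    Finset.univ.inf' Finset.univ_nonempty g = 0 := by
  refine le_antisymm (h0 ▸ Finset.inf'_le _ (Finset.mem_univ i0)) ?_
  exact Finset.le_inf' _ _ fun i _ => hg i

noncomputable def lamf (x : Esp p) : ℝ := cc p / (cc p - mf p x)

lemma lamf_pos (x : Esp p) (hx : x ≠ 0) : 0 < lamf p x :=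
  div_pos (cc_pos p) (by linarith [mf_lt p x hx])

noncomputable def psiF (x : Esp p) : Fin (p+1) → ℝ :=
  fun i => cc p + lamf p x * (qf p x i - cc p)

lemma lamf_mul_m_sub (x : Esp p) (hx : x ≠ 0) : lamf p x * (mf p x - cc p) = -cc p := by
  rw [lamf]
  have h : cc p - mf p x ≠ 0 := by linarith [mf_lt p x hx]
  field_simp
  ring

noncomputable def Psi (x : Zsp p) : Ysp p := by
  refine ⟨psiF p x.1, fun i => ?_, ?_, ?_⟩
  · have h1 : lamf p x.1 * (mf p x.1 - cc p) ≤ lamf p x.1 * (qf p x.1 i - cc p) :=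
      mul_le_mul_of_nonneg_left (by linarith [mf_le p x.1 i]) (le_of_lt (lamf_pos p x.1 x.2))
    have h2 := lamf_mul_m_sub p x.1 x.2
    simp only [psiF]
    linarith
  · simp only [psiF]
    rw [Finset.sum_add_distrib, ← Finset.mul_sum, Finset.sum_sub_distrib, qf_sum]
    simp only [Finset.sum_const, Finset.card_univ, Fintype.card_fin, nsmul_eq_mul]
    push_cast
    rw [cc_sum]
    ring
  · obtain ⟨i, hi⟩ := exists_eq_mf p x.1
    refine ⟨i, ?_⟩
    simp only [psiF, hi]
    rw [lamf_mul_m_sub p x.1 x.2]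
    ring

noncomputable def phiF (g : Fin (p+1) → ℝ) : Esp p :=
  WithLp.toLp 2 (fun j : Fin p => g j.castSucc - cc p)

lemma sum_phiF (g : Fin (p+1) → ℝ) :
    ∑ j, phiF p g j = (∑ j : Fin p, g j.castSucc) - p * cc p := by
  simp only [phiF, PiLp.toLp_apply, Finset.sum_sub_distrib, Finset.sum_const, Finset.card_univ,
    Fintype.card_fin, nsmul_eq_mul]

lemma g_last (g : Ysp p) : g.1 (Fin.last p) = 1 - ∑ j : Fin p, g.1 j.castSucc := by
  have := g.2.2.1
  rw [Fin.sum_univ_castSucc] at this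
  linarith

lemma phi_ne (g : Ysp p) : phiF p g.1 ≠ 0 := by
  intro h
  have hc : ∀ j : Fin p, g.1 j.castSucc = cc p := by
    intro j
    have := congrArg (fun v : Esp p => v j) h
    simp only [phiF, PiLp.toLp_apply] at this
    have h0 : (0 : Esp p) j = 0 := rfl
    rw [h0] at this
    linarith
  have hlast : g.1 (Fin.last p) = cc p := by
    rw [g_last]
    simp only [hc, Finset.sum_const, Finset.card_univ, Fintype.card_fin, nsmul_eq_mul]
    have := cc_sum p
    ring_nf
    ring_nf at this
    linarith
  have hall : ∀ i, g.1 i = cc p := by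
    intro i
    induction i using Fin.lastCases with
    | last => exact hlast
    | cast j => exact hc j
  obtain ⟨i0, hi0⟩ := g.2.2.2
  have := hall i0
  rw [hi0] at this
  exact absurd this.symm (ne_of_gt (cc_pos p))

noncomputable def Phi (g : Ysp p) : Zsp p := ⟨phiF p g.1, phi_ne p g⟩

lemma qf_phi (g : Ysp p) : qf p (phiF p g.1) = g.1 := by
  funext i
  induction i using Fin.lastCases with
  | last =>
    rw [qf_last, sum_phiF, g_last p g]
    have := cc_sum p
    ring_nf
    ring_nf at this
    linarith
  | cast j =>
    rw [qf_castSucc]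
    simp only [phiF, PiLp.toLp_apply]
    ring

lemma Psi_Phi (g : Ysp p) : Psi p (Phi p g) = g := by
  refine Subtype.ext (funext fun i => ?_)
  show psiF p (phiF p g.1) i = g.1 i
  obtain ⟨i0, hi0⟩ := g.2.2.2
  have hm : mf p (phiF p g.1) = 0 := by
    rw [mf, qf_phi p g]
    exact mf_nonneg_zero p g.1 g.2.1 i0 hi0
  have hlam : lamf p (phiF p g.1) = 1 := by
    rw [lamf, hm, sub_zero, div_self (ne_of_gt (cc_pos p))]
  rw [psiF, hlam, qf_phi p g]
  ring

lemma phi_psi (x : Zsp p) : phiF p (psiF p x.1) = lamf p x.1 • x.1 := by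
  ext j
  have hsmul : (lamf p x.1 • x.1) j = lamf p x.1 * x.1 j := rfl
  rw [hsmul]
  simp only [phiF, PiLp.toLp_apply, psiF, qf_castSucc]
  ring

lemma continuous_qf (i : Fin (p+1)) : Continuous (fun x : Esp p => qf p x i) := by
  simp only [qf]
  split
  · exact ((continuous_apply _).comp (PiLp.continuous_ofLp _ _)).add continuous_const
  · exact continuous_const.sub (continuous_finset_sum _ fun j _ =>
      (continuous_apply _).comp (PiLp.continuous_ofLp _ _))

lemma continuous_mf : Continuous (mf p) := by
  exact Continuous.finset_inf'_apply _ fun i _ => continuous_qf p i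

lemma continuous_lamf : Continuous (fun x : Zsp p => lamf p x.1) := by
  apply Continuous.div continuous_const
    (continuous_const.sub ((continuous_mf p).comp continuous_subtype_val))
  intro x
  have h1 := mf_lt p x.1 x.2
  intro h
  have h2 : cc p - mf p x.1 = 0 := h
  linarith

lemma continuous_Psi : Continuous (Psi p) := by
  refine Continuous.subtype_mk (continuous_pi fun i => ?_) _
  simp only [psiF]
  exact continuous_const.add ((continuous_lamf p).mul
    ((((continuous_qf p i).comp continuous_subtype_val)).sub continuous_const))

lemma continuous_Phi : Continuous (Phi p) := by
  refine Continuous.subtype_mk ?_ _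
  have h : Continuous (fun g : Ysp p => (fun j : Fin p => g.1 j.castSucc - cc p)) :=
    continuous_pi fun j =>
      ((continuous_apply _).comp continuous_subtype_val).sub continuous_const
  exact ((PiLp.continuous_toLp 2 (fun _ : Fin p => ℝ)).comp h :)

noncomputable def zretrF (q : I × Zsp p) : Esp p :=
  ((1 - (q.1 : ℝ)) * lamf p q.2.1 + (q.1 : ℝ)) • q.2.1

lemma zretr_scalar_pos (q : I × Zsp p) : 0 < (1 - (q.1 : ℝ)) * lamf p q.2.1 + (q.1 : ℝ) := by
  rcases lt_or_eq_of_le q.1.2.1 with h | h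
  · have := mul_nonneg (unitInterval.one_minus_nonneg q.1) (le_of_lt (lamf_pos p q.2.1 q.2.2))
    linarith
  · rw [← h]
    have := lamf_pos p q.2.1 q.2.2
    simp only [sub_zero]
    linarith

lemma zretrF_ne (q : I × Zsp p) : zretrF p q ≠ 0 :=
  smul_ne_zero (ne_of_gt (zretr_scalar_pos p q)) q.2.2

noncomputable def zretr (q : I × Zsp p) : Zsp p := ⟨zretrF p q, zretrF_ne p q⟩

lemma continuous_zretr : Continuous (zretr p) := by
  refine Continuous.subtype_mk ?_ _
  have heq : (fun q : I × Zsp p => zretrF p q) =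
      fun q => ((1 - (q.1 : ℝ)) * lamf p q.2.1 + (q.1 : ℝ)) • q.2.1 := rfl
  rw [show zretrF p = fun q => ((1 - (q.1 : ℝ)) * lamf p q.2.1 + (q.1 : ℝ)) • q.2.1 from rfl]
  have ht : Continuous (fun q : I × Zsp p => (q.1 : ℝ)) :=
    continuous_subtype_val.comp continuous_fst
  have hlam : Continuous (fun q : I × Zsp p => lamf p q.2.1) :=
    (continuous_lamf p).comp continuous_snd
  exact (((continuous_const.sub ht).mul hlam).add ht).smul
    (continuous_subtype_val.comp continuous_snd)

noncomputable def equiv2 : ContinuousMap.HomotopyEquiv (Ysp p) (Zsp p) where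
  toFun := ⟨Phi p, continuous_Phi p⟩
  invFun := ⟨Psi p, continuous_Psi p⟩
  left_inv := by
    have : (⟨Psi p, continuous_Psi p⟩ : C(Zsp p, Ysp p)).comp ⟨Phi p, continuous_Phi p⟩
        = ContinuousMap.id (Ysp p) := ContinuousMap.ext fun g => Psi_Phi p g
    rw [this]
  right_inv := by
    refine ⟨⟨⟨zretr p, continuous_zretr p⟩, ?_, ?_⟩⟩
    · intro x
      refine Subtype.ext ?_
      show zretrF p (0, x) = phiF p (psiF p x.1)
      rw [phi_psi, zretrF]
      norm_num
    · intro x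
      refine Subtype.ext ?_
      show zretrF p (1, x) = x.1
      rw [zretrF]
      norm_num


abbrev Ssp := Metric.sphere (0 : Esp p) 1

lemma norm_ne_zero' (x : Zsp p) : ‖x.1‖ ≠ 0 := norm_ne_zero_iff.mpr x.2

noncomputable def rmap (x : Zsp p) : Ssp p := by
  refine ⟨‖x.1‖⁻¹ • x.1, ?_⟩
  rw [mem_sphere_zero_iff_norm, norm_smul, norm_inv, norm_norm,
    inv_mul_cancel₀ (norm_ne_zero' p x)]

def imap (x : Ssp p) : Zsp p :=
  ⟨x.1, by
    intro h
    have := mem_sphere_zero_iff_norm.mp x.2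
    rw [h, norm_zero] at this
    norm_num at this⟩

lemma rmap_imap (x : Ssp p) : rmap p (imap p x) = x := by
  refine Subtype.ext ?_
  show ‖x.1‖⁻¹ • x.1 = x.1
  rw [mem_sphere_zero_iff_norm.mp x.2, inv_one, one_smul]

lemma continuous_rmap : Continuous (rmap p) := by
  refine Continuous.subtype_mk ?_ _
  exact ((continuous_subtype_val.norm).inv₀ (norm_ne_zero' p)).smul continuous_subtype_val

lemma continuous_imap : Continuous (imap p) :=
  Continuous.subtype_mk continuous_subtype_val _

noncomputable def sretrF (q : I × Zsp p) : Esp p :=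
  ((1 - (q.1 : ℝ)) * ‖q.2.1‖⁻¹ + (q.1 : ℝ)) • q.2.1

lemma sretr_scalar_pos (q : I × Zsp p) : 0 < (1 - (q.1 : ℝ)) * ‖q.2.1‖⁻¹ + (q.1 : ℝ) := by
  have hinv : 0 < ‖q.2.1‖⁻¹ := inv_pos.mpr (norm_pos_iff.mpr q.2.2)
  rcases lt_or_eq_of_le q.1.2.1 with h | h
  · have := mul_nonneg (unitInterval.one_minus_nonneg q.1) (le_of_lt hinv)
    linarith
  · rw [← h]
    simp only [sub_zero]
    linarith

noncomputable def sretr (q : I × Zsp p) : Zsp p :=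
  ⟨sretrF p q, smul_ne_zero (ne_of_gt (sretr_scalar_pos p q)) q.2.2⟩

lemma continuous_sretr : Continuous (sretr p) := by
  refine Continuous.subtype_mk ?_ _
  rw [show sretrF p = fun q => ((1 - (q.1 : ℝ)) * ‖q.2.1‖⁻¹ + (q.1 : ℝ)) • q.2.1 from rfl]
  have ht : Continuous (fun q : I × Zsp p => (q.1 : ℝ)) :=
    continuous_subtype_val.comp continuous_fst
  have hv : Continuous (fun q : I × Zsp p => q.2.1) :=
    continuous_subtype_val.comp continuous_snd
  have hn : Continuous (fun q : I × Zsp p => ‖q.2.1‖⁻¹) :=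
    hv.norm.inv₀ fun q => norm_ne_zero' p q.2
  exact (((continuous_const.sub ht).mul hn).add ht).smul hv

noncomputable def equiv3 : ContinuousMap.HomotopyEquiv (Zsp p) (Ssp p) where
  toFun := ⟨rmap p, continuous_rmap p⟩
  invFun := ⟨imap p, continuous_imap p⟩
  left_inv := by
    refine ⟨⟨⟨sretr p, continuous_sretr p⟩, ?_, ?_⟩⟩
    · intro x
      refine Subtype.ext ?_
      show sretrF p (0, x) = ‖x.1‖⁻¹ • x.1
      rw [sretrF]
      norm_num
    · intro x
      refine Subtype.ext ?_
      show sretrF p (1, x) = x.1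
      rw [sretrF]
      norm_num
  right_inv := by
    have : (⟨rmap p, continuous_rmap p⟩ : C(Zsp p, Ssp p)).comp ⟨imap p, continuous_imap p⟩
        = ContinuousMap.id (Ssp p) := ContinuousMap.ext fun x => rmap_imap p x
    rw [this]


end CutProof

/-- For `p ≥ 1` and `n = 2p+2`, the total 2-cut complex of `C_n^p` is homotopy
equivalent to the sphere `S^{(n-4)/2} = S^{p-1}` (the unit sphere in `ℝ^p`). -/
theorem stmt0 (p : ℕ) (hp : 1 ≤ p) :
    Nonempty (ContinuousMap.HomotopyEquiv
      (geomRealization (totalCut2 (cyclePower (2 * p + 2) p)))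
      (Metric.sphere (0 : EuclideanSpace ℝ (Fin p)) 1)) :=
  ⟨((CutProof.equiv1 p).trans (CutProof.equiv2 p)).trans (CutProof.equiv3 p)⟩
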